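/- Let f be C⁵ on a neighbourhood of x₀ and fix u, w ∈ E. Then the six-point stencil for the mixed third derivative, twice in the first-order direction ε•u and once in the second-order direction ε²•w, is fifth-order accurate: the function ε ↦ ( 4•f(x₀ + ε²•w) − 8•f(x₀ + (ε/2)•u + ε²•w) + 4•f(x₀ + ε•u + ε²•w) ) − ( 4•f(x₀) − 8•f(x₀ + (ε/2)•u) + 4•f(x₀ + ε•u) ) − ε⁴ • f⁽³⁾(x₀)[u,u,w] is O(ε⁵) as ε → 0. -/

import Mathlib

open Topology Asymptotics

section Aux

open Set Filter


variable {E F : Type*} [NormedAddCommGroup E] [NormedSpace ℝ E]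
  [NormedAddCommGroup F] [NormedSpace ℝ F]

/-- Differentiability of iterated derivatives on an open set. -/
lemma diffAt_iteratedFDeriv_of_open {f : E → F} {U : Set E} (hU : IsOpen U)
    (hf : ContDiffOn ℝ 5 f U) {k : ℕ} (hk : k < 5) {p : E} (hp : p ∈ U) :
    DifferentiableAt ℝ (iteratedFDeriv ℝ k f) p := by
  have hdiffW : DifferentiableWithinAt ℝ (iteratedFDerivWithin ℝ k f U) U p :=
    (hf.differentiableOn_iteratedFDerivWithin (by exact_mod_cast hk) hU.uniqueDiffOn) p hp
  have heq : iteratedFDerivWithin ℝ k f U =ᶠ[𝓝 p] iteratedFDeriv ℝ k f :=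
    Filter.eventuallyEq_of_mem (hU.mem_nhds hp) (iteratedFDerivWithin_of_isOpen k hU)
  exact (hdiffW.differentiableAt (hU.mem_nhds hp)).congr_of_eventuallyEq heq.symm

/-- Chain rule along a line for iterated derivatives, with an extra direction consed. -/
lemma hasDerivAt_iter {f : E → F} {U : Set E} (hU : IsOpen U)
    (hf : ContDiffOn ℝ 5 f U) {k : ℕ} (hk : k < 5) {z h : E} {t₀ : ℝ}
    (hz : z + t₀ • h ∈ U) (v : Fin k → E) :
    HasDerivAt (fun t : ℝ => iteratedFDeriv ℝ k f (z + t • h) v)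
      (iteratedFDeriv ℝ (k + 1) f (z + t₀ • h) (Fin.cons h v)) t₀ := by
  have hdiff : DifferentiableAt ℝ (iteratedFDeriv ℝ k f) (z + t₀ • h) :=
    diffAt_iteratedFDeriv_of_open hU hf hk hz
  have hcurve : HasDerivAt (fun t : ℝ => z + t • h) h t₀ := by
    simpa using ((hasDerivAt_id t₀).smul_const h).const_add z
  have hcomp := hdiff.hasFDerivAt.comp_hasDerivAt t₀ hcurve
  have hfinal := (ContinuousMultilinearMap.apply ℝ (fun _ : Fin k => E) F
    v).hasFDerivAt.comp_hasDerivAt t₀ hcomp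
  convert hfinal using 1
  · rfl
  · rw [iteratedFDeriv_succ_apply_left, Fin.tail_cons, Fin.cons_zero]; rfl


/-- Quantitative order-2 Taylor expansion along a segment, for iterated derivatives of `f`
contracted with a fixed tuple, in a fresh direction `h`. -/
lemma taylor3_along {f : E → F} {U : Set E} (hU : IsOpen U)
    (hf : ContDiffOn ℝ 5 f U) {k : ℕ} (hk : k + 2 < 5) (z h : E) (v : Fin k → E) (r : ℝ)
    (hseg : ∀ t ∈ uIcc (0:ℝ) r, z + t • h ∈ U) {M : ℝ}
    (hM : ∀ t ∈ uIcc (0:ℝ) r,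
      ‖iteratedFDeriv ℝ (k+3) f (z + t • h) (Fin.cons h (Fin.cons h (Fin.cons h v)))‖ ≤ M) :
    ‖iteratedFDeriv ℝ k f (z + r • h) v - iteratedFDeriv ℝ k f z v
      - r • iteratedFDeriv ℝ (k+1) f z (Fin.cons h v)
      - (r^2/2) • iteratedFDeriv ℝ (k+2) f z (Fin.cons h (Fin.cons h v))‖ ≤ M * |r|^3 := by
  have hz0 : z + (0:ℝ) • h = z := by simp
  set ψ₀ : ℝ → F := fun t => iteratedFDeriv ℝ k f (z + t • h) v with hψ₀
  set ψ₁ : ℝ → F := fun t => iteratedFDeriv ℝ (k+1) f (z + t • h) (Fin.cons h v) with hψ₁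
  set ψ₂ : ℝ → F := fun t => iteratedFDeriv ℝ (k+2) f (z + t • h)
    (Fin.cons h (Fin.cons h v)) with hψ₂
  set ψ₃ : ℝ → F := fun t => iteratedFDeriv ℝ (k+3) f (z + t • h)
    (Fin.cons h (Fin.cons h (Fin.cons h v))) with hψ₃
  have h0 : ∀ t ∈ uIcc (0:ℝ) r, HasDerivAt ψ₀ (ψ₁ t) t := fun t ht =>
    hasDerivAt_iter hU hf (by omega) (hseg t ht) v
  have h1 : ∀ t ∈ uIcc (0:ℝ) r, HasDerivAt ψ₁ (ψ₂ t) t := fun t ht =>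
    hasDerivAt_iter hU hf (by omega) (hseg t ht) (Fin.cons h v)
  have h2 : ∀ t ∈ uIcc (0:ℝ) r, HasDerivAt ψ₂ (ψ₃ t) t := fun t ht =>
    hasDerivAt_iter hU hf (by omega) (hseg t ht) (Fin.cons h (Fin.cons h v))
  have hM0 : 0 ≤ M := le_trans (norm_nonneg _) (hM 0 left_mem_uIcc)
  set g : ℝ → F := fun t => ψ₀ t + (r - t) • ψ₁ t + ((r - t)^2/2) • ψ₂ t with hg
  have hgd : ∀ t ∈ uIcc (0:ℝ) r,
      HasDerivWithinAt g (((r - t)^2/2) • ψ₃ t) (uIcc (0:ℝ) r) t := by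
    intro t ht
    have e1 : HasDerivAt (fun s : ℝ => r - s) (-1) t := by
      simpa using (hasDerivAt_id t).const_sub r
    have e2 : HasDerivAt (fun s : ℝ => (r - s)^2/2) (-(r - t)) t := by
      have := (e1.pow 2).div_const 2
      convert this using 1
      iterate 3 rfl
      simp
      ring
    have htot := ((h0 t ht).add (e1.smul (h1 t ht))).add (e2.smul (h2 t ht))
    refine HasDerivAt.hasDerivWithinAt ?_
    convert htot using 1
    · rfl
    module
  have hbound : ∀ t ∈ uIcc (0:ℝ) r, ‖((r - t)^2/2) • ψ₃ t‖ ≤ M * r^2 / 2 := by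
    intro t ht
    rw [mem_uIcc] at ht
    have h1 : (r - t)^2 ≤ r^2 := by rcases ht with ⟨h,h'⟩|⟨h,h'⟩ <;> nlinarith
    rw [norm_smul, Real.norm_eq_abs, abs_of_nonneg (by positivity)]
    have := hM t (by rw [mem_uIcc]; exact ht)
    calc (r - t)^2/2 * ‖ψ₃ t‖ ≤ r^2/2 * M := by
          apply mul_le_mul (by linarith) this (norm_nonneg _) (by positivity)
      _ = M * r^2/2 := by ring
  have MV := (convex_uIcc (0:ℝ) r).norm_image_sub_le_of_norm_hasDerivWithin_le hgd hbound
    left_mem_uIcc right_mem_uIcc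
  have hgr : g r = ψ₀ r := by simp [hg]
  have hg0 : g 0 = ψ₀ 0 + r • ψ₁ 0 + (r^2/2) • ψ₂ 0 := by simp [hg]
  rw [hgr, hg0] at MV
  have hψ00 : ψ₀ 0 = iteratedFDeriv ℝ k f z v := by rw [hψ₀]; simp
  have hψ10 : ψ₁ 0 = iteratedFDeriv ℝ (k+1) f z (Fin.cons h v) := by rw [hψ₁]; simp
  have hψ20 : ψ₂ 0 = iteratedFDeriv ℝ (k+2) f z (Fin.cons h (Fin.cons h v)) := by
    rw [hψ₂]; simp
  rw [hψ00, hψ10, hψ20] at MV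
  have : ‖iteratedFDeriv ℝ k f (z + r • h) v - iteratedFDeriv ℝ k f z v
      - r • iteratedFDeriv ℝ (k+1) f z (Fin.cons h v)
      - (r^2/2) • iteratedFDeriv ℝ (k+2) f z (Fin.cons h (Fin.cons h v))‖
      = ‖ψ₀ r - (iteratedFDeriv ℝ k f z v + r • iteratedFDeriv ℝ (k+1) f z (Fin.cons h v)
        + (r^2/2) • iteratedFDeriv ℝ (k+2) f z (Fin.cons h (Fin.cons h v)))‖ := by
    congr 1
    abel
  rw [this]
  refine MV.trans ?_
  have : M * r^2/2 * ‖r - 0‖ = M * (r^2 * |r|) / 2 := by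
    rw [sub_zero, Real.norm_eq_abs]; ring
  rw [this]
  have : r^2 * |r| = |r|^3 := by
    rw [← sq_abs]; ring
  rw [this]
  nlinarith [pow_nonneg (abs_nonneg r) 3]

/-- Quantitative order-1 Taylor expansion along a segment. -/
lemma taylor2_along {f : E → F} {U : Set E} (hU : IsOpen U)
    (hf : ContDiffOn ℝ 5 f U) {k : ℕ} (hk : k + 1 < 5) (z h : E) (v : Fin k → E) (r : ℝ)
    (hseg : ∀ t ∈ uIcc (0:ℝ) r, z + t • h ∈ U) {M : ℝ}
    (hM : ∀ t ∈ uIcc (0:ℝ) r,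
      ‖iteratedFDeriv ℝ (k+2) f (z + t • h) (Fin.cons h (Fin.cons h v))‖ ≤ M) :
    ‖iteratedFDeriv ℝ k f (z + r • h) v - iteratedFDeriv ℝ k f z v
      - r • iteratedFDeriv ℝ (k+1) f z (Fin.cons h v)‖ ≤ M * r^2 := by
  set ψ₀ : ℝ → F := fun t => iteratedFDeriv ℝ k f (z + t • h) v with hψ₀
  set ψ₁ : ℝ → F := fun t => iteratedFDeriv ℝ (k+1) f (z + t • h) (Fin.cons h v) with hψ₁
  set ψ₂ : ℝ → F := fun t => iteratedFDeriv ℝ (k+2) f (z + t • h)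
    (Fin.cons h (Fin.cons h v)) with hψ₂
  have h0 : ∀ t ∈ uIcc (0:ℝ) r, HasDerivAt ψ₀ (ψ₁ t) t := fun t ht =>
    hasDerivAt_iter hU hf (by omega) (hseg t ht) v
  have h1 : ∀ t ∈ uIcc (0:ℝ) r, HasDerivAt ψ₁ (ψ₂ t) t := fun t ht =>
    hasDerivAt_iter hU hf (by omega) (hseg t ht) (Fin.cons h v)
  have hM0 : 0 ≤ M := le_trans (norm_nonneg _) (hM 0 left_mem_uIcc)
  set g : ℝ → F := fun t => ψ₀ t + (r - t) • ψ₁ t with hg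
  have hgd : ∀ t ∈ uIcc (0:ℝ) r,
      HasDerivWithinAt g ((r - t) • ψ₂ t) (uIcc (0:ℝ) r) t := by
    intro t ht
    have e1 : HasDerivAt (fun s : ℝ => r - s) (-1) t := by
      simpa using (hasDerivAt_id t).const_sub r
    have htot := (h0 t ht).add (e1.smul (h1 t ht))
    refine HasDerivAt.hasDerivWithinAt ?_
    convert htot using 1
    · rfl
    module
  have hbound : ∀ t ∈ uIcc (0:ℝ) r, ‖(r - t) • ψ₂ t‖ ≤ M * |r| := by
    intro t ht
    rw [mem_uIcc] at ht
    have h1 : |r - t| ≤ |r| := by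
      rw [abs_le]
      rcases ht with ⟨h,h'⟩|⟨h,h'⟩ <;> constructor <;>
        cases abs_cases r <;> linarith [abs_nonneg r, le_abs_self r, neg_abs_le r]
    rw [norm_smul, Real.norm_eq_abs]
    have := hM t (by rw [mem_uIcc]; exact ht)
    calc |r - t| * ‖ψ₂ t‖ ≤ |r| * M :=
          mul_le_mul h1 this (norm_nonneg _) (abs_nonneg r)
      _ = M * |r| := by ring
  have MV := (convex_uIcc (0:ℝ) r).norm_image_sub_le_of_norm_hasDerivWithin_le hgd hbound
    left_mem_uIcc right_mem_uIcc
  have hgr : g r = ψ₀ r := by simp [hg]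
  have hg0 : g 0 = ψ₀ 0 + r • ψ₁ 0 := by simp [hg]
  rw [hgr, hg0] at MV
  have hψ00 : ψ₀ 0 = iteratedFDeriv ℝ k f z v := by rw [hψ₀]; simp
  have hψ10 : ψ₁ 0 = iteratedFDeriv ℝ (k+1) f z (Fin.cons h v) := by rw [hψ₁]; simp
  rw [hψ00, hψ10] at MV
  have heq : ‖iteratedFDeriv ℝ k f (z + r • h) v - iteratedFDeriv ℝ k f z v
      - r • iteratedFDeriv ℝ (k+1) f z (Fin.cons h v)‖
      = ‖ψ₀ r - (iteratedFDeriv ℝ k f z v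
        + r • iteratedFDeriv ℝ (k+1) f z (Fin.cons h v))‖ := by
    congr 1
    abel
  rw [heq]
  refine MV.trans ?_
  rw [sub_zero, Real.norm_eq_abs]
  nlinarith [sq_abs r, abs_nonneg r]

end Aux

open Filter in
set_option maxHeartbeats 4000000 in
/-- Six-point stencil for the mixed third derivative, twice in the
first-order direction `ε•u` and once in the second-order direction `ε²•w`:
`(4f(x₀+ε²w) - 8f(x₀+(ε/2)u+ε²w) + 4f(x₀+εu+ε²w))
  - (4f(x₀) - 8f(x₀+(ε/2)u) + 4f(x₀+εu)) = ε⁴ • f⁽³⁾(x₀)[u,u,w] + O(ε⁵)`. -/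
theorem mixed_third_derivative_stencil_order5
    {E F : Type*} [NormedAddCommGroup E] [NormedSpace ℝ E] [CompleteSpace E]
    [NormedAddCommGroup F] [NormedSpace ℝ F] [CompleteSpace F]
    (f : E → F) (x₀ u w : E)
    (hf : ContDiffAt ℝ 5 f x₀) :
    (fun ε : ℝ =>
        ((4 : ℝ) • f (x₀ + ε ^ 2 • w) - (8 : ℝ) • f (x₀ + (ε / 2) • u + ε ^ 2 • w)
            + (4 : ℝ) • f (x₀ + ε • u + ε ^ 2 • w))
          - ((4 : ℝ) • f x₀ - (8 : ℝ) • f (x₀ + (ε / 2) • u) + (4 : ℝ) • f (x₀ + ε • u))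
          - ε ^ 4 • iteratedFDeriv ℝ 3 f x₀ ![u, u, w])
      =O[𝓝 (0 : ℝ)] fun ε => ε ^ 5 := by
  obtain ⟨U₀, hU₀, hfU₀⟩ := hf.contDiffOn le_rfl (by simp)
  set U : Set E := interior U₀ with hUdef
  have hU : IsOpen U := isOpen_interior
  have hx₀U : x₀ ∈ U := mem_interior_iff_mem_nhds.2 hU₀
  have hfU : ContDiffOn ℝ 5 f U := hfU₀.mono interior_subset
  have hc3 : ContinuousAt (iteratedFDeriv ℝ 3 f) x₀ :=
    (diffAt_iteratedFDeriv_of_open hU hfU (by norm_num) hx₀U).continuousAt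
  have hc4 : ContinuousAt (iteratedFDeriv ℝ 4 f) x₀ :=
    (diffAt_iteratedFDeriv_of_open hU hfU (by norm_num) hx₀U).continuousAt
  set M₃ : ℝ := ‖iteratedFDeriv ℝ 3 f x₀‖ + 1 with hM₃def
  set M₄ : ℝ := ‖iteratedFDeriv ℝ 4 f x₀‖ + 1 with hM₄def
  have hM₃pos : 0 < M₃ := by positivity
  have hM₄pos : 0 < M₄ := by positivity
  have hev3 : ∀ᶠ z in 𝓝 x₀, ‖iteratedFDeriv ℝ 3 f z‖ ≤ M₃ :=
    (hc3.norm.eventually_lt_const (lt_add_one _)).mono fun z hz => hz.le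
  have hev4 : ∀ᶠ z in 𝓝 x₀, ‖iteratedFDeriv ℝ 4 f z‖ ≤ M₄ :=
    (hc4.norm.eventually_lt_const (lt_add_one _)).mono fun z hz => hz.le
  have hevU : ∀ᶠ z in 𝓝 x₀, z ∈ U := hU.eventually_mem hx₀U
  obtain ⟨δ, hδpos, hδ⟩ := Metric.eventually_nhds_iff_ball.1 ((hevU.and hev3).and hev4)
  set K : ℝ := ‖u‖ + ‖w‖ + 1 with hKdef
  have hKpos : 0 < K := by positivity
  rw [isBigO_iff]
  refine ⟨16*(M₃*(‖w‖^3)) + 12*(M₄*(‖u‖^3*‖w‖)) + 6*(M₄*(‖u‖^2*‖w‖^2)), ?_⟩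
  have hsmall : ∀ᶠ ε : ℝ in 𝓝 0, |ε| < min 1 (δ/K) := by
    have habscont : Tendsto (fun ε : ℝ => |ε|) (𝓝 0) (𝓝 |(0:ℝ)|) :=
      continuous_abs.continuousAt
    exact habscont.eventually_lt_const (by simp; positivity)
  filter_upwards [hsmall] with ε hε
  obtain ⟨hε1, hεδK⟩ := lt_min_iff.1 hε
  have hε1' : |ε| ≤ 1 := hε1.le
  have hεK : |ε| * K < δ := (lt_div_iff₀ hKpos).1 hεδK
  have habs : (0:ℝ) ≤ |ε| := abs_nonneg ε
  have hsq : ε^2 ≤ |ε| := by nlinarith [sq_abs ε]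
  have hsqnn : (0:ℝ) ≤ ε^2 := sq_nonneg ε
  -- membership and bounds near x₀
  have hmem : ∀ y : E, ‖y‖ ≤ |ε| * (‖u‖ + ‖w‖) → (x₀ + y ∈ U ∧
      ‖iteratedFDeriv ℝ 3 f (x₀ + y)‖ ≤ M₃ ∧ ‖iteratedFDeriv ℝ 4 f (x₀ + y)‖ ≤ M₄) := by
    intro y hy
    have hball : x₀ + y ∈ Metric.ball x₀ δ := by
      rw [Metric.mem_ball, dist_eq_norm, add_sub_cancel_left]
      have : |ε| * (‖u‖ + ‖w‖) < δ := by nlinarith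
      linarith
    obtain ⟨⟨a, b⟩, c⟩ := hδ _ hball
    exact ⟨a, b, c⟩
  have habs_t : ∀ r : ℝ, |r| ≤ |ε| → ∀ t ∈ Set.uIcc (0:ℝ) r, |t| ≤ |ε| := by
    intro r hr t ht
    rw [Set.mem_uIcc] at ht
    rw [abs_le]
    rcases ht with ⟨h1, h2⟩ | ⟨h1, h2⟩ <;>
      constructor <;> nlinarith [le_abs_self r, neg_abs_le r, abs_nonneg r]
  have hεw : ‖ε^2 • w‖ = ε^2 * ‖w‖ := by
    rw [norm_smul, Real.norm_eq_abs, abs_of_nonneg hsqnn]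
  -- generic second-order expansion in the w-direction
  have hFgen : ∀ (a : ℝ), |a| ≤ |ε| →
      ‖f ((x₀ + a • u) + ε^2 • w) - f (x₀ + a • u)
        - ε^2 • iteratedFDeriv ℝ 1 f (x₀ + a • u) ![w]
        - (1/2 : ℝ) • ((ε^2)^2 • iteratedFDeriv ℝ 2 f (x₀ + a • u) ![w,w])‖
        ≤ M₃ * (ε^2 * ‖w‖)^3 := by
    intro a ha
    have hpt : ∀ t ∈ Set.uIcc (0:ℝ) 1, ((x₀ + a • u) + t • (ε^2 • w) ∈ U ∧
        ‖iteratedFDeriv ℝ 3 f ((x₀ + a • u) + t • (ε^2 • w))‖ ≤ M₃) := by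
      intro t ht
      have ht' : |t| ≤ 1 := by
        rw [Set.uIcc_of_le zero_le_one] at ht
        rw [abs_le]; exact ⟨by linarith [ht.1], ht.2⟩
      rw [add_assoc]
      have hbnd : ‖a • u + t • (ε^2 • w)‖ ≤ |ε| * (‖u‖ + ‖w‖) := by
        calc ‖a • u + t • (ε^2 • w)‖ ≤ ‖a • u‖ + ‖t • (ε^2 • w)‖ := norm_add_le _ _
          _ = |a| * ‖u‖ + |t| * (ε^2 * ‖w‖) := by
              rw [norm_smul, norm_smul, hεw, Real.norm_eq_abs, Real.norm_eq_abs]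
          _ ≤ |ε| * (‖u‖ + ‖w‖) := by
              nlinarith [mul_le_mul_of_nonneg_right ha (norm_nonneg u),
                mul_le_mul_of_nonneg_right ht' (mul_nonneg hsqnn (norm_nonneg w)),
                mul_le_mul_of_nonneg_right hsq (norm_nonneg w)]
      exact ⟨(hmem _ hbnd).1, (hmem _ hbnd).2.1⟩
    have hv1 : (Fin.cons (ε^2 • w) ![] : Fin 1 → E) = ![ε^2 • w] := by
      funext i; fin_cases i <;> rfl
    have hv2 : (Fin.cons (ε^2 • w) (Fin.cons (ε^2 • w) ![]) : Fin 2 → E)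
        = ![ε^2 • w, ε^2 • w] := by
      funext i; fin_cases i <;> rfl
    have hv3 : (Fin.cons (ε^2 • w) (Fin.cons (ε^2 • w) (Fin.cons (ε^2 • w) ![])) : Fin 3 → E)
        = ![ε^2 • w, ε^2 • w, ε^2 • w] := by
      funext i; fin_cases i <;> rfl
    have T := taylor3_along hU hfU (k := 0) (by norm_num) (x₀ + a • u) (ε^2 • w) ![] 1
      (fun t ht => (hpt t ht).1) (M := M₃ * (ε^2 * ‖w‖)^3) ?_
    · rw [hv2, hv1] at T
      have e1 : iteratedFDeriv ℝ 1 f (x₀ + a • u) ![ε^2 • w]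
          = ε^2 • iteratedFDeriv ℝ 1 f (x₀ + a • u) ![w] := by
        have harg : (![ε^2 • w] : Fin 1 → E)
            = fun i => (fun _ : Fin 1 => ε^2) i • (![w] : Fin 1 → E) i := by
          funext i; fin_cases i <;> rfl
        rw [harg, ContinuousMultilinearMap.map_smul_univ]
        simp
      have e2 : iteratedFDeriv ℝ 2 f (x₀ + a • u) ![ε^2 • w, ε^2 • w]
          = (ε^2)^2 • iteratedFDeriv ℝ 2 f (x₀ + a • u) ![w, w] := by
        have harg : (![ε^2 • w, ε^2 • w] : Fin 2 → E)
            = fun i => (fun _ : Fin 2 => ε^2) i • (![w, w] : Fin 2 → E) i := by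
          funext i; fin_cases i <;> rfl
        rw [harg, ContinuousMultilinearMap.map_smul_univ]
        simp [sq]
      rw [e1, e2] at T
      simpa using T
    · intro t ht
      rw [hv3]
      refine le_trans (ContinuousMultilinearMap.le_opNorm _ _) ?_
      have hprod : (∏ i : Fin 3, ‖(![ε^2 • w, ε^2 • w, ε^2 • w] : Fin 3 → E) i‖)
          = (ε^2 * ‖w‖)^3 := by
        simp [Fin.prod_univ_three, hεw]
        try ring
        try tauto
      rw [hprod]
      exact mul_le_mul_of_nonneg_right (hpt t ht).2 (by positivity)
  -- expansions of the first and second derivative along the u-direction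
  have hsegu : ∀ r : ℝ, |r| ≤ |ε| → ∀ t ∈ Set.uIcc (0:ℝ) r, (x₀ + t • u ∈ U ∧
      ‖iteratedFDeriv ℝ 4 f (x₀ + t • u)‖ ≤ M₄) := by
    intro r hr t ht
    have hbnd : ‖t • u‖ ≤ |ε| * (‖u‖ + ‖w‖) := by
      rw [norm_smul, Real.norm_eq_abs]
      nlinarith [habs_t r hr t ht, norm_nonneg u, norm_nonneg w, abs_nonneg t]
    exact ⟨(hmem _ hbnd).1, (hmem _ hbnd).2.2⟩
  have hGgen : ∀ r : ℝ, |r| ≤ |ε| →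
      ‖iteratedFDeriv ℝ 1 f (x₀ + r • u) ![w] - iteratedFDeriv ℝ 1 f x₀ ![w]
        - r • iteratedFDeriv ℝ 2 f x₀ ![u, w]
        - (r^2/2) • iteratedFDeriv ℝ 3 f x₀ ![u, u, w]‖
        ≤ (M₄ * (‖u‖^3 * ‖w‖)) * |ε|^3 := by
    intro r hr
    have hv1 : (Fin.cons u ![w] : Fin 2 → E) = ![u, w] := by
      funext i; fin_cases i <;> rfl
    have hv2 : (Fin.cons u (Fin.cons u ![w]) : Fin 3 → E) = ![u, u, w] := by
      funext i; fin_cases i <;> rfl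
    have hv3 : (Fin.cons u (Fin.cons u (Fin.cons u ![w])) : Fin 4 → E) = ![u, u, u, w] := by
      funext i; fin_cases i <;> rfl
    have T := taylor3_along hU hfU (k := 1) (by norm_num) x₀ u ![w] r
      (fun t ht => (hsegu r hr t ht).1) (M := M₄ * (‖u‖^3 * ‖w‖)) ?_
    · rw [hv2, hv1] at T
      refine T.trans ?_
      have : |r|^3 ≤ |ε|^3 := pow_le_pow_left₀ (abs_nonneg r) hr 3
      nlinarith [norm_nonneg u, norm_nonneg w, hM₄pos.le,
        mul_nonneg (mul_nonneg (pow_nonneg (norm_nonneg u) 3) (norm_nonneg w)) hM₄pos.le]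
    · intro t ht
      rw [hv3]
      refine le_trans (ContinuousMultilinearMap.le_opNorm _ _) ?_
      have hprod : (∏ i : Fin 4, ‖(![u, u, u, w] : Fin 4 → E) i‖) = ‖u‖^3 * ‖w‖ := by
        simp [Fin.prod_univ_four]
        try ring
        try tauto
      rw [hprod]
      exact mul_le_mul_of_nonneg_right (hsegu r hr t ht).2 (by positivity)
  have hHgen : ∀ r : ℝ, |r| ≤ |ε| →
      ‖iteratedFDeriv ℝ 2 f (x₀ + r • u) ![w, w] - iteratedFDeriv ℝ 2 f x₀ ![w, w]
        - r • iteratedFDeriv ℝ 3 f x₀ ![u, w, w]‖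
        ≤ (M₄ * (‖u‖^2 * ‖w‖^2)) * ε^2 := by
    intro r hr
    have hv1 : (Fin.cons u ![w, w] : Fin 3 → E) = ![u, w, w] := by
      funext i; fin_cases i <;> rfl
    have hv2 : (Fin.cons u (Fin.cons u ![w, w]) : Fin 4 → E) = ![u, u, w, w] := by
      funext i; fin_cases i <;> rfl
    have T := taylor2_along hU hfU (k := 2) (by norm_num) x₀ u ![w, w] r
      (fun t ht => (hsegu r hr t ht).1) (M := M₄ * (‖u‖^2 * ‖w‖^2)) ?_
    · rw [hv1] at T
      refine T.trans ?_
      have : r^2 ≤ ε^2 := by nlinarith [sq_abs r, sq_abs ε, abs_nonneg r]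
      nlinarith [norm_nonneg u, norm_nonneg w, hM₄pos.le,
        mul_nonneg (mul_nonneg (pow_nonneg (norm_nonneg u) 2)
          (pow_nonneg (norm_nonneg w) 2)) hM₄pos.le]
    · intro t ht
      rw [hv2]
      refine le_trans (ContinuousMultilinearMap.le_opNorm _ _) ?_
      have hprod : (∏ i : Fin 4, ‖(![u, u, w, w] : Fin 4 → E) i‖) = ‖u‖^2 * ‖w‖^2 := by
        simp [Fin.prod_univ_four]
        try ring
        try tauto
      rw [hprod]
      exact mul_le_mul_of_nonneg_right (hsegu r hr t ht).2 (by positivity)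
  -- instantiate
  have hF₁ := hFgen 0 (by simp)
  have hF₂ := hFgen (ε/2) (by rw [abs_div, abs_two]; linarith [abs_nonneg ε])
  have hF₃ := hFgen ε le_rfl
  have hG₂ := hGgen (ε/2) (by rw [abs_div, abs_two]; linarith [abs_nonneg ε])
  have hG₃ := hGgen ε le_rfl
  have hH₂ := hHgen (ε/2) (by rw [abs_div, abs_two]; linarith [abs_nonneg ε])
  have hH₃ := hHgen ε le_rfl
  rw [show x₀ + (0:ℝ) • u = x₀ by simp] at hF₁
  set XF₁ := f (x₀ + ε^2 • w) - f x₀ - ε^2 • iteratedFDeriv ℝ 1 f x₀ ![w]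
    - (1/2 : ℝ) • ((ε^2)^2 • iteratedFDeriv ℝ 2 f x₀ ![w,w]) with hXF₁
  set XF₂ := f ((x₀ + (ε/2) • u) + ε^2 • w) - f (x₀ + (ε/2) • u)
    - ε^2 • iteratedFDeriv ℝ 1 f (x₀ + (ε/2) • u) ![w]
    - (1/2 : ℝ) • ((ε^2)^2 • iteratedFDeriv ℝ 2 f (x₀ + (ε/2) • u) ![w,w]) with hXF₂
  set XF₃ := f ((x₀ + ε • u) + ε^2 • w) - f (x₀ + ε • u)
    - ε^2 • iteratedFDeriv ℝ 1 f (x₀ + ε • u) ![w]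
    - (1/2 : ℝ) • ((ε^2)^2 • iteratedFDeriv ℝ 2 f (x₀ + ε • u) ![w,w]) with hXF₃
  set XG₂ := iteratedFDeriv ℝ 1 f (x₀ + (ε/2) • u) ![w] - iteratedFDeriv ℝ 1 f x₀ ![w]
    - (ε/2) • iteratedFDeriv ℝ 2 f x₀ ![u, w]
    - ((ε/2)^2/2) • iteratedFDeriv ℝ 3 f x₀ ![u, u, w] with hXG₂
  set XG₃ := iteratedFDeriv ℝ 1 f (x₀ + ε • u) ![w] - iteratedFDeriv ℝ 1 f x₀ ![w]
    - ε • iteratedFDeriv ℝ 2 f x₀ ![u, w]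
    - (ε^2/2) • iteratedFDeriv ℝ 3 f x₀ ![u, u, w] with hXG₃
  set XH₂ := iteratedFDeriv ℝ 2 f (x₀ + (ε/2) • u) ![w, w] - iteratedFDeriv ℝ 2 f x₀ ![w, w]
    - (ε/2) • iteratedFDeriv ℝ 3 f x₀ ![u, w, w] with hXH₂
  set XH₃ := iteratedFDeriv ℝ 2 f (x₀ + ε • u) ![w, w] - iteratedFDeriv ℝ 2 f x₀ ![w, w]
    - ε • iteratedFDeriv ℝ 3 f x₀ ![u, w, w] with hXH₃
  have hid : ((4 : ℝ) • f (x₀ + ε ^ 2 • w) - (8 : ℝ) • f (x₀ + (ε / 2) • u + ε ^ 2 • w)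
            + (4 : ℝ) • f (x₀ + ε • u + ε ^ 2 • w))
          - ((4 : ℝ) • f x₀ - (8 : ℝ) • f (x₀ + (ε / 2) • u) + (4 : ℝ) • f (x₀ + ε • u))
          - ε ^ 4 • iteratedFDeriv ℝ 3 f x₀ ![u, u, w]
      = ((4:ℝ) • XF₁ - (8:ℝ) • XF₂ + (4:ℝ) • XF₃)
        + ε^2 • ((-8:ℝ) • XG₂ + (4:ℝ) • XG₃)
        + ((ε^2)^2/2) • ((-8:ℝ) • XH₂ + (4:ℝ) • XH₃) := by
    rw [hXF₁, hXF₂, hXF₃, hXG₂, hXG₃, hXH₂, hXH₃]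
    module
  calc ‖((4 : ℝ) • f (x₀ + ε ^ 2 • w) - (8 : ℝ) • f (x₀ + (ε / 2) • u + ε ^ 2 • w)
            + (4 : ℝ) • f (x₀ + ε • u + ε ^ 2 • w))
          - ((4 : ℝ) • f x₀ - (8 : ℝ) • f (x₀ + (ε / 2) • u) + (4 : ℝ) • f (x₀ + ε • u))
          - ε ^ 4 • iteratedFDeriv ℝ 3 f x₀ ![u, u, w]‖
      = ‖((4:ℝ) • XF₁ - (8:ℝ) • XF₂ + (4:ℝ) • XF₃)
        + ε^2 • ((-8:ℝ) • XG₂ + (4:ℝ) • XG₃)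
        + ((ε^2)^2/2) • ((-8:ℝ) • XH₂ + (4:ℝ) • XH₃)‖ := by rw [hid]
    _ ≤ ‖(4:ℝ) • XF₁ - (8:ℝ) • XF₂ + (4:ℝ) • XF₃‖
        + ‖ε^2 • ((-8:ℝ) • XG₂ + (4:ℝ) • XG₃)‖
        + ‖((ε^2)^2/2) • ((-8:ℝ) • XH₂ + (4:ℝ) • XH₃)‖ := norm_add₃_le
    _ ≤ (4 * ‖XF₁‖ + 8 * ‖XF₂‖ + 4 * ‖XF₃‖)
        + ε^2 * (8 * ‖XG₂‖ + 4 * ‖XG₃‖)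
        + ((ε^2)^2/2) * (8 * ‖XH₂‖ + 4 * ‖XH₃‖) := by
        gcongr ?_ + ?_ + ?_
        · calc ‖(4:ℝ) • XF₁ - (8:ℝ) • XF₂ + (4:ℝ) • XF₃‖
              ≤ ‖(4:ℝ) • XF₁ - (8:ℝ) • XF₂‖ + ‖(4:ℝ) • XF₃‖ := norm_add_le _ _
            _ ≤ (‖(4:ℝ) • XF₁‖ + ‖(8:ℝ) • XF₂‖) + ‖(4:ℝ) • XF₃‖ := by
                gcongr; exact norm_sub_le _ _
            _ = 4 * ‖XF₁‖ + 8 * ‖XF₂‖ + 4 * ‖XF₃‖ := by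
                simp [norm_smul]
        · rw [norm_smul, Real.norm_eq_abs, abs_of_nonneg hsqnn]
          gcongr
          calc ‖(-8:ℝ) • XG₂ + (4:ℝ) • XG₃‖ ≤ ‖(-8:ℝ) • XG₂‖ + ‖(4:ℝ) • XG₃‖ := norm_add_le _ _
            _ = 8 * ‖XG₂‖ + 4 * ‖XG₃‖ := by simp [norm_smul]
        · rw [norm_smul, Real.norm_eq_abs, abs_of_nonneg (by positivity)]
          gcongr
          calc ‖(-8:ℝ) • XH₂ + (4:ℝ) • XH₃‖ ≤ ‖(-8:ℝ) • XH₂‖ + ‖(4:ℝ) • XH₃‖ := norm_add_le _ _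
            _ = 8 * ‖XH₂‖ + 4 * ‖XH₃‖ := by simp [norm_smul]
    _ ≤ 16*(M₃*(‖w‖^3))*|ε|^5 + 12*(M₄*(‖u‖^3*‖w‖))*|ε|^5 + 6*(M₄*(‖u‖^2*‖w‖^2))*|ε|^5 := by
        have e56 : ε^2 * |ε|^3 = |ε|^5 := by
          rw [← sq_abs]; ring
        have e6 : (ε^2 * ‖w‖)^3 = (ε^2)^3 * ‖w‖^3 := by ring
        have h65 : (ε^2)^3 ≤ |ε|^5 := by
          have : (ε^2)^3 = |ε|^6 := by rw [← sq_abs ε]; ring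
          rw [this]
          nlinarith [pow_nonneg habs 5]
        have h64 : (ε^2)^2 * ε^2 ≤ |ε|^5 := by
          have : (ε^2)^2 * ε^2 = |ε|^6 := by rw [← sq_abs ε]; ring
          rw [this]
          nlinarith [pow_nonneg habs 5]
        have bF : 4*‖XF₁‖+8*‖XF₂‖+4*‖XF₃‖ ≤ 16*(M₃*(‖w‖^3))*|ε|^5 := by
          have h1 : M₃*(ε^2*‖w‖)^3 ≤ (M₃*(‖w‖^3))*|ε|^5 := by
            calc M₃*(ε^2*‖w‖)^3 = (M₃*(‖w‖^3))*(ε^2)^3 := by ring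
              _ ≤ (M₃*(‖w‖^3))*|ε|^5 := mul_le_mul_of_nonneg_left h65 (by positivity)
          linarith [hF₁, hF₂, hF₃]
        have bG : ε^2*(8*‖XG₂‖+4*‖XG₃‖) ≤ 12*(M₄*(‖u‖^3*‖w‖))*|ε|^5 := by
          have h2 : 8*‖XG₂‖+4*‖XG₃‖ ≤ 12*(M₄*(‖u‖^3*‖w‖)*|ε|^3) := by linarith [hG₂, hG₃]
          calc ε^2*(8*‖XG₂‖+4*‖XG₃‖) ≤ ε^2*(12*(M₄*(‖u‖^3*‖w‖)*|ε|^3)) :=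
                mul_le_mul_of_nonneg_left h2 hsqnn
            _ = 12*(M₄*(‖u‖^3*‖w‖))*(ε^2*|ε|^3) := by ring
            _ = 12*(M₄*(‖u‖^3*‖w‖))*|ε|^5 := by rw [e56]
        have bH : ((ε^2)^2/2)*(8*‖XH₂‖+4*‖XH₃‖) ≤ 6*(M₄*(‖u‖^2*‖w‖^2))*|ε|^5 := by
          have h3 : 8*‖XH₂‖+4*‖XH₃‖ ≤ 12*(M₄*(‖u‖^2*‖w‖^2)*ε^2) := by linarith [hH₂, hH₃]
          calc ((ε^2)^2/2)*(8*‖XH₂‖+4*‖XH₃‖) ≤ ((ε^2)^2/2)*(12*(M₄*(‖u‖^2*‖w‖^2)*ε^2)) :=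
                mul_le_mul_of_nonneg_left h3 (by positivity)
            _ = 6*(M₄*(‖u‖^2*‖w‖^2))*((ε^2)^2*ε^2) := by ring
            _ ≤ 6*(M₄*(‖u‖^2*‖w‖^2))*|ε|^5 := mul_le_mul_of_nonneg_left h64 (by positivity)
        exact add_le_add (add_le_add bF bG) bH
    _ = (16*(M₃*(‖w‖^3)) + 12*(M₄*(‖u‖^3*‖w‖)) + 6*(M₄*(‖u‖^2*‖w‖^2))) * ‖ε^5‖ := by
        rw [Real.norm_eq_abs, abs_pow]; ring
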